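/- For every real number k with 0 ≤ k < 1, the complete elliptic integrals satisfy the Landen-type identity E(2√k/(1+k)) = (2E(k) − (1−k²)K(k))/(1+k). -/

import Mathlib

open Real

/-- Complete elliptic integral of the first kind. -/
noncomputable def completeEllipticK (k : ℝ) : ℝ :=
  ∫ θ in (0:ℝ)..(π/2), 1 / Real.sqrt (1 - k^2 * Real.sin θ ^ 2)

/-- Complete elliptic integral of the second kind. -/
noncomputable def completeEllipticE (k : ℝ) : ℝ :=
  ∫ θ in (0:ℝ)..(π/2), Real.sqrt (1 - k^2 * Real.sin θ ^ 2)

set_option maxHeartbeats 1000000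

lemma lan_alg1 (k s c a : ℝ) (hsc : s^2+c^2=1) (ha : a^2 = 1 - k^2*s^2) :
    (s*c*((1+k)-a))^2 + (c^2*a+(1+k)*s^2)^2 = (1+k*s^2)^2 := by
  linear_combination (c^4 + s^2*c^2) * ha + (1 + c^2 + s^2 + 2*k*s^2 - k^2*s^2*c^2) * hsc

lemma lan_alg2 (k s c a : ℝ) (hsc : s^2+c^2=1) (ha : a^2 = 1 - k^2*s^2) :
    ((1+k)*(c^2-s^2)*a - (c^2-s^2)*a^2 + k^2*s^2*c^2) * (c^2*a+(1+k)*s^2)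
      - (s*c*((1+k)-a)) * (-(2*s*c*a^2) - k^2*s*c^3 + 2*(1+k)*s*c*a)
      = (1+k*s^2)*((1+k)*(1-k*s^2) - (1+k*s^2)*a) := by
  linear_combination (c^4 - c^4*a + 2*s^2*c^2 - s^2*c^2*a + s^4 + k*c^4 + 2*k*s^2*c^2 + k*s^4) * ha
    + (1 - a + c^2 - c^2*a + s^2 - s^2*a + k + k*c^2 + k*s^2 - 2*k*s^2*a + k^2*s^2*c^2*a - k^2*s^4 - k^3*s^4) * hsc

lemma lan_alg3 (k s c a : ℝ) (hsc : s^2+c^2=1) (ha : a^2 = 1 - k^2*s^2) :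
    (1+k)^2*(1-k*s^2)^2 - (1+k^2-2*k^2*s^2)*(1+k*s^2)^2
      = 2*k*(((c^2-s^2)*a^2 - k^2*s^2*c^2)*(1+k*s^2) - 2*k*s^2*c^2*a^2) := by
  linear_combination (-2*k*c^2 + 2*k*s^2 + 2*k^2*s^2*c^2 + 2*k^2*s^4) * ha
    + (-2*k + 2*k^2*s^2 + 4*k^3*s^2) * hsc

section LanAux

variable {k : ℝ} (hk0 : 0 ≤ k) (hk1 : k < 1)

noncomputable def lanA (k x : ℝ) : ℝ := Real.sqrt (1 - k^2 * Real.sin x ^ 2)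
noncomputable def lanN (k x : ℝ) : ℝ := Real.sin x * Real.cos x * ((1+k) - lanA k x)
noncomputable def lanD (k x : ℝ) : ℝ := Real.cos x ^ 2 * lanA k x + (1+k) * Real.sin x ^ 2
noncomputable def lanG (k x : ℝ) : ℝ := x + Real.arctan (lanN k x / lanD k x)
noncomputable def lanG' (k x : ℝ) : ℝ :=
  (1+k) * (1 - k * Real.sin x ^ 2) / ((1 + k * Real.sin x ^ 2) * lanA k x)
noncomputable def lanW (k x : ℝ) : ℝ :=
  2*k/(1+k) * (Real.sin x * Real.cos x * lanA k x / (1 + k * Real.sin x ^ 2))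
noncomputable def lanP (k x : ℝ) : ℝ := (2 * lanA k x - (1-k^2) / lanA k x) / (1+k)

include hk0 hk1 in
lemma lanA_sq_pos (x : ℝ) : 0 < 1 - k^2 * Real.sin x ^ 2 := by
  nlinarith [sin_sq_le_one x, sq_nonneg (Real.sin x), sq_nonneg (1-k)]

include hk0 hk1 in
lemma lanA_pos (x : ℝ) : 0 < lanA k x := Real.sqrt_pos.2 (lanA_sq_pos hk0 hk1 x)

include hk0 hk1 in
lemma lanA_sq (x : ℝ) : (lanA k x)^2 = 1 - k^2 * Real.sin x ^ 2 :=
  Real.sq_sqrt (lanA_sq_pos hk0 hk1 x).le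

include hk0 in
lemma lanV_pos (x : ℝ) : 0 < 1 + k * Real.sin x ^ 2 := by
  nlinarith [sq_nonneg (Real.sin x)]

include hk0 hk1 in
lemma lanD_pos (x : ℝ) : 0 < lanD k x := by
  rcases eq_or_ne (Real.sin x) 0 with h | h
  · have hc : Real.cos x ^ 2 = 1 := by rw [cos_sq']; simp [h]
    simpa [lanD, h, hc] using lanA_pos hk0 hk1 x
  · have hs : 0 < Real.sin x ^ 2 := by positivity
    have := lanA_pos hk0 hk1 x
    have hc := mul_nonneg (sq_nonneg (Real.cos x)) this.le
    unfold lanD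
    nlinarith

include hk0 hk1 in
lemma lanA_hasDeriv (x : ℝ) :
    HasDerivAt (lanA k) (-(k^2 * Real.sin x * Real.cos x) / lanA k x) x := by
  have h : HasDerivAt (fun t => 1 - k^2 * Real.sin t ^ 2)
      (-(k^2 * (2 * Real.sin x * Real.cos x))) x := by
    have := ((Real.hasDerivAt_sin x).pow 2).const_mul (k^2)
    have h2 := (hasDerivAt_const x (1:ℝ)).sub this
    refine h2.congr_deriv ?_
    ring
  have h3 := h.sqrt (lanA_sq_pos hk0 hk1 x).ne'
  refine h3.congr_deriv ?_
  symm
  have ha := (lanA_pos hk0 hk1 x).ne'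
  unfold lanA at ha ⊢
  field_simp

include hk0 hk1 in
lemma lanG_hasDeriv (x : ℝ) : HasDerivAt (lanG k) (lanG' k x) x := by
  have ha := lanA_hasDeriv hk0 hk1 x
  have hA0 := lanA_pos hk0 hk1 x
  have hD0 := lanD_pos hk0 hk1 x
  have hv0 := lanV_pos hk0 (x := x)
  unfold lanD at hD0
  have key : HasDerivAt (fun t => t + Real.arctan
      ((Real.sin t * Real.cos t * ((1+k) - lanA k t)) /
        (Real.cos t ^ 2 * lanA k t + (1+k) * Real.sin t ^ 2)))
      ((1+k) * (1 - k * Real.sin x ^ 2) / ((1 + k * Real.sin x ^ 2) * lanA k x)) x := by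
      have hN := ((Real.hasDerivAt_sin x).mul (Real.hasDerivAt_cos x)).mul
          ((hasDerivAt_const x ((1:ℝ)+k)).sub ha)
      have hD := (((Real.hasDerivAt_cos x).pow 2).mul ha).add
          (((Real.hasDerivAt_sin x).pow 2).const_mul ((1:ℝ)+k))
      have hq := hN.div hD hD0.ne'
      have hg := (hasDerivAt_id x).add hq.arctan
      refine hg.congr_deriv ?_
      symm
      simp only [Pi.mul_apply, Pi.sub_apply, Pi.add_apply, Pi.div_apply, Pi.pow_apply]
      set s := Real.sin x with hs
      set c := Real.cos x with hc
      set a := lanA k x with hadef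
      have hsc : s^2 + c^2 = 1 := sin_sq_add_cos_sq x
      have ha2 : a^2 = 1 - k^2*s^2 := Real.sq_sqrt (by nlinarith [hA0] : (0:ℝ) ≤ 1 - k^2 * Real.sin x ^ 2)
      have e1 : 1 + (s*c*(1+k-a)/(c^2*a+(1+k)*s^2))^2 = ((1+k*s^2)/(c^2*a+(1+k)*s^2))^2 := by
        rw [div_pow, div_pow, eq_div_iff (by positivity), add_mul,
          div_mul_cancel₀ _ (by positivity : (c ^ 2 * a + (1+k) * s ^ 2) ^ 2 ≠ 0), one_mul]
        linear_combination lan_alg1 k s c a hsc ha2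
      have helper : ∀ (m v D : ℝ), D ≠ 0 → v ≠ 0 → 1 + 1/(v/D)^2 * (m/D^2) = (v^2 + m)/v^2 := by
        intro m v D hD hv; field_simp
      rw [e1, helper _ _ _ hD0.ne' hv0.ne']
      rw [div_eq_div_iff (by positivity) (by positivity)]
      norm_num
      field_simp
      linear_combination -1 * lan_alg2 k s c a hsc ha2
  exact key

include hk0 hk1 in
lemma lan_sin_g (x : ℝ) :
    Real.sin (lanG k x) = (1+k) * Real.sin x / (1 + k * Real.sin x ^ 2) := by
  have hA0 := lanA_pos hk0 hk1 x
  have hD0 := lanD_pos hk0 hk1 x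
  have hv0 := lanV_pos hk0 (x := x)
  unfold lanD at hD0
  unfold lanG lanN lanD
  rw [Real.sin_add, Real.sin_arctan, Real.cos_arctan]
  set s := Real.sin x with hs
  set c := Real.cos x with hc
  set a := lanA k x with hadef
  have hsc : s^2 + c^2 = 1 := sin_sq_add_cos_sq x
  have ha2 : a^2 = 1 - k^2*s^2 := Real.sq_sqrt (by nlinarith [hA0] : (0:ℝ) ≤ 1 - k^2 * Real.sin x ^ 2)
  have e1 : 1 + (s*c*((1+k)-a)/(c^2*a+(1+k)*s^2))^2 = ((1+k*s^2)/(c^2*a+(1+k)*s^2))^2 := by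
    rw [div_pow, div_pow, eq_div_iff (by positivity), add_mul,
      div_mul_cancel₀ _ (by positivity : (c ^ 2 * a + (1+k) * s ^ 2) ^ 2 ≠ 0), one_mul]
    linear_combination lan_alg1 k s c a hsc ha2
  rw [e1, Real.sqrt_sq (by positivity)]
  field_simp
  rw [div_eq_iff (by intro h; linarith [hD0])]
  linear_combination s*(c^2*a+s^2*(1+k))*(1+k) * hsc

include hk0 hk1 in
lemma lan_fg (x : ℝ) :
    Real.sqrt (1 - (2 * Real.sqrt k / (1+k))^2 * Real.sin (lanG k x) ^ 2)
      = (1 - k * Real.sin x ^ 2) / (1 + k * Real.sin x ^ 2) := by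
  have hv0 := lanV_pos hk0 (x := x)
  have h1k : (0:ℝ) < 1 + k := by linarith
  have hks : 0 ≤ 1 - k * Real.sin x ^ 2 := by nlinarith [sin_sq_le_one x, sq_nonneg (Real.sin x)]
  have hsk : (Real.sqrt k)^2 = k := Real.sq_sqrt hk0
  rw [lan_sin_g hk0 hk1 x]
  have e : 1 - (2 * Real.sqrt k / (1+k))^2 * ((1+k) * Real.sin x / (1 + k * Real.sin x ^ 2))^2
      = ((1 - k * Real.sin x ^ 2) / (1 + k * Real.sin x ^ 2))^2 := by
    rw [div_pow, mul_pow, hsk]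
    field_simp
    ring
  rw [e, Real.sqrt_sq (by positivity)]

include hk0 hk1 in
lemma lanW_hasDeriv (x : ℝ) :
    HasDerivAt (lanW k)
      (lanG' k x * ((1 - k * Real.sin x ^ 2) / (1 + k * Real.sin x ^ 2)) - lanP k x) x := by
  have ha := lanA_hasDeriv hk0 hk1 x
  have hA0 := lanA_pos hk0 hk1 x
  have hv0 := lanV_pos hk0 (x := x)
  have h1k : (0:ℝ) < 1 + k := by linarith
  have hu := ((Real.hasDerivAt_sin x).mul (Real.hasDerivAt_cos x)).mul ha
  have hv : HasDerivAt (fun t => 1 + k * Real.sin t ^ 2) (k * (2 * Real.sin x ^ (2-1) * Real.cos x)) x := by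
    exact (((Real.hasDerivAt_sin x).pow 2).const_mul k).const_add 1
  have hq := hu.div hv hv0.ne'
  have hW := hq.const_mul (2*k/(1+k))
  have key : HasDerivAt (fun t => 2*k/(1+k) * (Real.sin t * Real.cos t * lanA k t / (1 + k * Real.sin t ^ 2)))
      (lanG' k x * ((1 - k * Real.sin x ^ 2) / (1 + k * Real.sin x ^ 2)) - lanP k x) x := by
    refine hW.congr_deriv ?_
    symm
    simp only [Pi.mul_apply, Pi.sub_apply, Pi.add_apply, Pi.div_apply, Pi.pow_apply]
    unfold lanG' lanP
    set s := Real.sin x with hs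
    set c := Real.cos x with hc
    set a := lanA k x with hadef
    have hsc : s^2 + c^2 = 1 := sin_sq_add_cos_sq x
    have ha2 : a^2 = 1 - k^2*s^2 := Real.sq_sqrt (by nlinarith [hA0] : (0:ℝ) ≤ 1 - k^2 * Real.sin x ^ 2)
    field_simp
    linear_combination lan_alg3 k s c a hsc ha2 - 2*(1+k*s^2)^2 * ha2
  exact key


set_option linter.unusedSectionVars false in
include hk0 hk1 in
lemma lanA_cont : Continuous (lanA k) := by
  unfold lanA
  exact (continuous_const.sub (continuous_const.mul ((Real.continuous_sin).pow 2))).sqrt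

include hk0 hk1 in
lemma lanG'_cont : Continuous (lanG' k) := by
  unfold lanG'
  refine (continuous_const.mul (continuous_const.sub
    (continuous_const.mul ((Real.continuous_sin).pow 2)))).div
    ((continuous_const.add (continuous_const.mul ((Real.continuous_sin).pow 2))).mul
      (lanA_cont hk0 hk1)) (fun x => ?_)
  exact (mul_pos (lanV_pos hk0 (x := x)) (lanA_pos hk0 hk1 x)).ne'

include hk0 hk1 in
lemma lanP_cont : Continuous (lanP k) := by
  unfold lanP
  refine ((continuous_const.mul (lanA_cont hk0 hk1)).sub
    (continuous_const.div (lanA_cont hk0 hk1) (fun x => (lanA_pos hk0 hk1 x).ne'))).div_const _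

lemma lanG_zero : lanG k 0 = 0 := by
  unfold lanG lanN
  simp

lemma lanG_pi_div_two : lanG k (π/2) = π/2 := by
  unfold lanG lanN
  simp

lemma lanW_zero : lanW k 0 = 0 := by unfold lanW; simp

lemma lanW_pi_div_two : lanW k (π/2) = 0 := by unfold lanW; simp

end LanAux

/-- Landen-type identity: `E(2√k/(1+k)) = (2E(k) − (1−k²)K(k))/(1+k)` for `0 ≤ k < 1`. -/
theorem landen_E (k : ℝ) (hk0 : 0 ≤ k) (hk1 : k < 1) :
    completeEllipticE (2 * Real.sqrt k / (1 + k)) =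
      (2 * completeEllipticE k - (1 - k^2) * completeEllipticK k) / (1 + k) := by
  have h1k : (0:ℝ) < 1 + k := by linarith
  have hGd : ∀ x ∈ Set.uIcc (0:ℝ) (π/2), HasDerivAt (lanG k) (lanG' k x) x :=
    fun x _ => lanG_hasDeriv hk0 hk1 x
  have step1 : completeEllipticE (2 * Real.sqrt k / (1 + k)) =
      ∫ x in (0:ℝ)..(π/2), lanG' k x *
        Real.sqrt (1 - (2 * Real.sqrt k / (1+k))^2 * Real.sin (lanG k x) ^ 2) := by
    have hcv := intervalIntegral.integral_comp_smul_deriv hGd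
      ((lanG'_cont hk0 hk1).continuousOn)
      (g := fun θ => Real.sqrt (1 - (2 * Real.sqrt k / (1+k))^2 * Real.sin θ ^ 2))
      ((continuous_const.sub (continuous_const.mul ((Real.continuous_sin).pow 2))).sqrt)
    rw [lanG_zero, lanG_pi_div_two] at hcv
    rw [completeEllipticE, ← hcv]
    simp only [Function.comp, smul_eq_mul]
  rw [step1]
  have step2 : (∫ x in (0:ℝ)..(π/2), lanG' k x *
        Real.sqrt (1 - (2 * Real.sqrt k / (1+k))^2 * Real.sin (lanG k x) ^ 2))
      = ∫ x in (0:ℝ)..(π/2), (lanP k x +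
          (lanG' k x * ((1 - k * Real.sin x ^ 2) / (1 + k * Real.sin x ^ 2)) - lanP k x)) := by
    refine intervalIntegral.integral_congr (fun x _ => ?_)
    rw [lan_fg hk0 hk1 x]
    ring
  rw [step2]
  have hcont2 : Continuous (fun x => lanG' k x * ((1 - k * Real.sin x ^ 2) / (1 + k * Real.sin x ^ 2)) - lanP k x) := by
    refine Continuous.sub ((lanG'_cont hk0 hk1).mul ?_) (lanP_cont hk0 hk1)
    exact (continuous_const.sub (continuous_const.mul ((Real.continuous_sin).pow 2))).div
      (continuous_const.add (continuous_const.mul ((Real.continuous_sin).pow 2)))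
      (fun x => (lanV_pos hk0 (x := x)).ne')
  rw [intervalIntegral.integral_add ((lanP_cont hk0 hk1).intervalIntegrable _ _)
    (hcont2.intervalIntegrable _ _)]
  have step3 : (∫ x in (0:ℝ)..(π/2),
      (lanG' k x * ((1 - k * Real.sin x ^ 2) / (1 + k * Real.sin x ^ 2)) - lanP k x)) = 0 := by
    rw [intervalIntegral.integral_eq_sub_of_hasDerivAt
      (fun x _ => lanW_hasDeriv hk0 hk1 x) (hcont2.intervalIntegrable _ _)]
    rw [lanW_pi_div_two, lanW_zero, sub_zero]
  rw [step3, add_zero]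
  have step4 : (∫ x in (0:ℝ)..(π/2), lanP k x)
      = (2 * completeEllipticE k - (1 - k^2) * completeEllipticK k) / (1 + k) := by
    have hA : Continuous (fun x => Real.sqrt (1 - k^2 * Real.sin x ^ 2)) :=
      (continuous_const.sub (continuous_const.mul ((Real.continuous_sin).pow 2))).sqrt
    have hInt1 : IntervalIntegrable (fun x => 2 * Real.sqrt (1 - k^2 * Real.sin x ^ 2))
        MeasureTheory.volume 0 (π/2) := (continuous_const.mul hA).intervalIntegrable _ _
    have hInt2 : IntervalIntegrable
        (fun x => (1-k^2) * (1 / Real.sqrt (1 - k^2 * Real.sin x ^ 2)))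
        MeasureTheory.volume 0 (π/2) :=
      (continuous_const.mul (continuous_const.div hA
        (fun x => (lanA_pos hk0 hk1 x).ne'))).intervalIntegrable _ _
    have e : ∀ x : ℝ, lanP k x = (1/(1+k)) * (2 * Real.sqrt (1 - k^2 * Real.sin x ^ 2)
        - (1-k^2) * (1 / Real.sqrt (1 - k^2 * Real.sin x ^ 2))) := by
      intro x
      unfold lanP lanA
      rw [mul_one_div]
      ring
    rw [intervalIntegral.integral_congr (fun x _ => e x),
      intervalIntegral.integral_const_mul,
      intervalIntegral.integral_sub hInt1 hInt2,
      intervalIntegral.integral_const_mul, intervalIntegral.integral_const_mul,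
      completeEllipticE, completeEllipticK]
    ring
  rw [step4]
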